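/- Let Ω ⊂ ℝ^d (d ≥ 1) be a bounded Lebesgue-measurable set with |Ω| > 0, equipped with Lebesgue measure, and let d′ ≥ 1. Let m > 0 and θ > 0, and let α : ℝ → ℝ be twice continuously differentiable with α″(y) ≥ m for all y ∈ [0,1]. Let ρ, ρ_h, η_h : Ω → [0,1] be measurable, let u, u_h ∈ L⁴(Ω)^{d′}, and let U_θ ⊆ Ω be measurable with |u|² ≥ θ a.e. on U_θ. Assume the two variational inequalities ∫_Ω α′(ρ)|u|²(ρ_h − ρ) dx ≥ 0 and ∫_Ω α′(ρ_h)|u_h|²(η_h − ρ_h) dx ≥ 0 hold. Then m θ ∫_{U_θ} (ρ − ρ_h)² dx ≤ ∫_Ω α′(ρ_h)|u_h|²(η_h − ρ) dx + ∫_Ω α′(ρ_h)(|u_h|² − |u|²)(ρ − ρ_h) dx. -/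

import Mathlib

open MeasureTheory

/-- Key estimate for strong convergence of the discretized material distribution:
combining the continuous and discretized first-order optimality conditions (FOC3)
and (FOC3-h) with the strong convexity of `α` yields
`m θ ∫_{U_θ} (ρ − ρ_h)² dx ≤ ∫_Ω α′(ρ_h)|u_h|²(η_h − ρ) dx
  + ∫_Ω α′(ρ_h)(|u_h|² − |u|²)(ρ − ρ_h) dx`. -/
theorem material_distribution_key_estimate
    {d d' : ℕ} (hd : 1 ≤ d) (hd' : 1 ≤ d')
    (Ω : Set (Fin d → ℝ)) (hΩmeas : MeasurableSet Ω)
    (hΩbdd : Bornology.IsBounded Ω) (hΩpos : 0 < volume Ω)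
    (m θ : ℝ) (hm : 0 < m) (hθ : 0 < θ)
    (α : ℝ → ℝ) (hα : ContDiff ℝ 2 α)
    (hα'' : ∀ y ∈ Set.Icc (0 : ℝ) 1, m ≤ deriv (deriv α) y)
    (ρ ρh ηh : (Fin d → ℝ) → ℝ)
    (hρmeas : Measurable ρ) (hρhmeas : Measurable ρh) (hηhmeas : Measurable ηh)
    (hρ01 : ∀ x, ρ x ∈ Set.Icc (0 : ℝ) 1)
    (hρh01 : ∀ x, ρh x ∈ Set.Icc (0 : ℝ) 1)
    (hηh01 : ∀ x, ηh x ∈ Set.Icc (0 : ℝ) 1)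
    (u uh : (Fin d → ℝ) → EuclideanSpace ℝ (Fin d'))
    (hu : MemLp u 4 (volume.restrict Ω)) (huh : MemLp uh 4 (volume.restrict Ω))
    (Uθ : Set (Fin d → ℝ)) (hUθmeas : MeasurableSet Uθ) (hUθΩ : Uθ ⊆ Ω)
    -- |u|² ≥ θ a.e. on U_θ
    (hUθ : ∀ᵐ x ∂(volume.restrict Uθ), θ ≤ ‖u x‖ ^ 2)
    -- (FOC3) tested with η = ρ_h
    (hfoc : 0 ≤ ∫ x in Ω, deriv α (ρ x) * ‖u x‖ ^ 2 * (ρh x - ρ x))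
    -- (FOC3-h) tested with η_h
    (hfoch : 0 ≤ ∫ x in Ω, deriv α (ρh x) * ‖uh x‖ ^ 2 * (ηh x - ρh x)) :
    m * θ * (∫ x in Uθ, (ρ x - ρh x) ^ 2) ≤
      (∫ x in Ω, deriv α (ρh x) * ‖uh x‖ ^ 2 * (ηh x - ρ x)) +
      ∫ x in Ω, deriv α (ρh x) * (‖uh x‖ ^ 2 - ‖u x‖ ^ 2) * (ρ x - ρh x) := by
  classical
  set ν := volume.restrict Ω with hν
  have hΩfin : volume Ω < ⊤ := hΩbdd.measure_lt_top
  have hνfin : IsFiniteMeasure ν := by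
    constructor
    rwa [hν, Measure.restrict_apply_univ]
  -- continuity and differentiability of deriv α
  have hderiv_cont : Continuous (deriv α) := hα.continuous_deriv (by norm_num)
  have hderiv_diff : Differentiable ℝ (deriv α) := by
    have h2 : ContDiff ℝ (1 + 1) α := by norm_num; exact hα
    have := (contDiff_succ_iff_deriv.mp h2).2.2
    exact this.differentiable (by norm_num)
  -- bound on deriv α on [0,1]
  obtain ⟨C, hC⟩ : ∃ C, ∀ y ∈ Set.Icc (0:ℝ) 1, ‖deriv α y‖ ≤ C :=
    isCompact_Icc.exists_bound_of_continuousOn hderiv_cont.continuousOn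
  have hC0 : 0 ≤ C := le_trans (norm_nonneg _) (hC 0 (by norm_num))
  -- strong monotonicity of deriv α on [0,1]
  have hmono : ∀ a ∈ Set.Icc (0:ℝ) 1, ∀ b ∈ Set.Icc (0:ℝ) 1,
      m * (a - b)^2 ≤ (deriv α a - deriv α b) * (a - b) := by
    have hMon : MonotoneOn (fun y => deriv α y - m * y) (Set.Icc (0:ℝ) 1) := by
      apply monotoneOn_of_deriv_nonneg (convex_Icc 0 1)
      · exact (hderiv_cont.sub (continuous_const.mul continuous_id)).continuousOn
      · exact ((hderiv_diff.sub ((differentiable_id.const_mul m))).differentiableOn)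
      · intro x hx
        rw [interior_Icc] at hx
        have hx' : x ∈ Set.Icc (0:ℝ) 1 := Set.Ioo_subset_Icc_self hx
        have hd : HasDerivAt (fun y => deriv α y - m * y)
            (deriv (deriv α) x - m) x := by
          have h2 := (hasDerivAt_id x).const_mul m
          exact ((hderiv_diff x).hasDerivAt.sub h2).congr_deriv (by ring)
        rw [hd.deriv]
        linarith [hα'' x hx']
    intro a ha b hb
    rcases le_total b a with h | h
    · have := hMon hb ha h
      have h2 : m * (a - b) ≤ deriv α a - deriv α b := by
        simp only at this; linarith
      nlinarith [sub_nonneg.mpr h]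
    · have := hMon ha hb h
      have h2 : m * (b - a) ≤ deriv α b - deriv α a := by
        simp only at this; linarith
      nlinarith [sub_nonneg.mpr h]
  -- integrable weights
  have hu2 : MemLp u 2 ν := hu.mono_exponent (by norm_num)
  have huh2 : MemLp uh 2 ν := huh.mono_exponent (by norm_num)
  have hwu : Integrable (fun x => ‖u x‖ ^ 2) ν := hu2.norm.integrable_sq
  have hwuh : Integrable (fun x => ‖uh x‖ ^ 2) ν := huh2.norm.integrable_sq
  -- helper for integrability of bounded * integrable
  have hbdd_mul : ∀ (b w : (Fin d → ℝ) → ℝ), Integrable w ν →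
      AEStronglyMeasurable b ν → (∃ C', ∀ x, ‖b x‖ ≤ C') →
      Integrable (fun x => b x * w x) ν := by
    intro b w hw hb hbb
    obtain ⟨C', hC'⟩ := hbb
    exact hw.bdd_mul hb (Filter.Eventually.of_forall hC')
  have habs1 : ∀ (p q : ℝ), p ∈ Set.Icc (0:ℝ) 1 → q ∈ Set.Icc (0:ℝ) 1 → |p - q| ≤ 1 := by
    intro p q hp hq
    rw [abs_sub_le_iff]
    constructor <;> [linarith [hp.1, hp.2, hq.1, hq.2]; linarith [hp.1, hp.2, hq.1, hq.2]]
  -- measurability pieces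
  have hAρ : Measurable (fun x => deriv α (ρ x)) := hderiv_cont.measurable.comp hρmeas
  have hAρh : Measurable (fun x => deriv α (ρh x)) := hderiv_cont.measurable.comp hρhmeas
  -- generic integrability: c(φ) * ‖v‖² * s
  have hint : ∀ (c s : (Fin d → ℝ) → ℝ) (w : (Fin d → ℝ) → ℝ),
      Measurable c → Measurable s → Integrable w ν →
      (∀ x, ‖c x‖ ≤ C) → (∀ x, ‖s x‖ ≤ 1) →
      Integrable (fun x => c x * w x * s x) ν := by
    intro c s w hc hs hw hcb hsb
    have : Integrable (fun x => (c x * s x) * w x) ν := by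
      apply hbdd_mul _ _ hw ((hc.mul hs).aestronglyMeasurable)
      refine ⟨C, fun x => ?_⟩
      calc ‖c x * s x‖ = ‖c x‖ * ‖s x‖ := norm_mul _ _
        _ ≤ C * 1 := mul_le_mul (hcb x) (hsb x) (norm_nonneg _) hC0
        _ = C := mul_one C
    exact this.congr (Filter.Eventually.of_forall fun x => by ring)
  have hcbρ : ∀ x, ‖deriv α (ρ x)‖ ≤ C := fun x => hC _ (hρ01 x)
  have hcbρh : ∀ x, ‖deriv α (ρh x)‖ ≤ C := fun x => hC _ (hρh01 x)
  have hsb : ∀ (p q : (Fin d → ℝ) → ℝ), (∀ x, p x ∈ Set.Icc (0:ℝ) 1) →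
      (∀ x, q x ∈ Set.Icc (0:ℝ) 1) → ∀ x, ‖p x - q x‖ ≤ 1 := by
    intro p q hp hq x
    simpa [Real.norm_eq_abs] using habs1 (p x) (q x) (hp x) (hq x)
  -- named integrands
  set f1 : (Fin d → ℝ) → ℝ := fun x => deriv α (ρ x) * ‖u x‖ ^ 2 * (ρh x - ρ x) with hf1
  set f2 : (Fin d → ℝ) → ℝ := fun x => deriv α (ρh x) * ‖u x‖ ^ 2 * (ρ x - ρh x) with hf2
  set T1 : (Fin d → ℝ) → ℝ := fun x => deriv α (ρh x) * ‖uh x‖ ^ 2 * (ηh x - ρ x) with hT1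
  set F : (Fin d → ℝ) → ℝ := fun x => deriv α (ρh x) * ‖uh x‖ ^ 2 * (ηh x - ρh x) with hF
  set T2a : (Fin d → ℝ) → ℝ := fun x => deriv α (ρh x) * ‖uh x‖ ^ 2 * (ρ x - ρh x) with hT2a
  set G : (Fin d → ℝ) → ℝ :=
    fun x => (deriv α (ρ x) - deriv α (ρh x)) * ‖u x‖ ^ 2 * (ρ x - ρh x) with hG
  have hif1 : Integrable f1 ν := hint _ _ _ hAρ (hρhmeas.sub hρmeas) hwu hcbρ
    (hsb _ _ hρh01 hρ01)
  have hif2 : Integrable f2 ν := hint _ _ _ hAρh (hρmeas.sub hρhmeas) hwu hcbρh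
    (hsb _ _ hρ01 hρh01)
  have hiT1 : Integrable T1 ν := hint _ _ _ hAρh (hηhmeas.sub hρmeas) hwuh hcbρh
    (hsb _ _ hηh01 hρ01)
  have hiF : Integrable F ν := hint _ _ _ hAρh (hηhmeas.sub hρhmeas) hwuh hcbρh
    (hsb _ _ hηh01 hρh01)
  have hiT2a : Integrable T2a ν := hint _ _ _ hAρh (hρmeas.sub hρhmeas) hwuh hcbρh
    (hsb _ _ hρ01 hρh01)
  have hiG : Integrable G ν := by
    have : Integrable (fun x => -f1 x - f2 x) ν := (hif1.neg).sub hif2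
    exact this.congr (Filter.Eventually.of_forall fun x => by simp [hf1, hf2, hG]; ring)
  -- pointwise nonnegativity of G
  have hGnn : ∀ x, 0 ≤ G x := by
    intro x
    have h := hmono (ρ x) (hρ01 x) (ρh x) (hρh01 x)
    have hsq : 0 ≤ m * (ρ x - ρh x)^2 := by positivity
    have hn : 0 ≤ ‖u x‖ ^ 2 := by positivity
    simp only [hG]
    nlinarith
  -- Step 1: m θ ∫_{Uθ} (ρ - ρh)² ≤ ∫_{Uθ} G
  have hUθfin : volume Uθ < ⊤ := (hΩbdd.subset hUθΩ).measure_lt_top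
  haveI hUθinst : IsFiniteMeasure (volume.restrict Uθ) :=
    ⟨by rwa [Measure.restrict_apply_univ]⟩
  have hsqint : Integrable (fun x => m * θ * (ρ x - ρh x)^2) (volume.restrict Uθ) := by
    apply Integrable.mono' (integrable_const (m * θ))
      (((hρmeas.sub hρhmeas).pow_const 2).const_mul (m * θ)).aestronglyMeasurable
    refine Filter.Eventually.of_forall fun x => ?_
    have h1 : |ρ x - ρh x| ≤ 1 := habs1 _ _ (hρ01 x) (hρh01 x)
    have h2 : (ρ x - ρh x)^2 ≤ 1 := by nlinarith [abs_nonneg (ρ x - ρh x), sq_abs (ρ x - ρh x)]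
    have h3 : 0 ≤ (ρ x - ρh x)^2 := sq_nonneg _
    have hmt : 0 ≤ m * θ := by positivity
    rw [Real.norm_eq_abs, abs_of_nonneg (by positivity)]
    simp only [Pi.sub_apply]
    nlinarith [mul_nonneg hmt (sub_nonneg.mpr h2)]
  have hGintU : Integrable G (volume.restrict Uθ) :=
    hiG.mono_measure (Measure.restrict_mono hUθΩ le_rfl)
  have step1 : (∫ x in Uθ, m * θ * (ρ x - ρh x)^2) ≤ ∫ x in Uθ, G x := by
    apply integral_mono_ae hsqint hGintU
    filter_upwards [hUθ] with x hx
    have h := hmono (ρ x) (hρ01 x) (ρh x) (hρh01 x)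
    have hDs : 0 ≤ (deriv α (ρ x) - deriv α (ρh x)) * (ρ x - ρh x) :=
      le_trans (by positivity) h
    have hp1 := mul_le_mul_of_nonneg_left hx hDs
    have hp2 := mul_le_mul_of_nonneg_right h hθ.le
    simp only [hG]
    nlinarith [hp1, hp2]
  -- Step 2: ∫_{Uθ} G ≤ ∫_Ω G
  have step2 : (∫ x in Uθ, G x) ≤ ∫ x in Ω, G x := by
    apply setIntegral_mono_set hiG
      (Filter.Eventually.of_forall fun x => hGnn x)
      (Filter.Eventually.of_forall hUθΩ)
  -- Step 3: ∫ G = -∫ f1 - ∫ f2 ≤ -∫ f2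
  have step3 : (∫ x in Ω, G x) ≤ -∫ x in Ω, f2 x := by
    have hia : (∫ x in Ω, (f1 x + f2 x)) = (∫ x in Ω, f1 x) + ∫ x in Ω, f2 x :=
      integral_add hif1 hif2
    have hGe : (∫ x in Ω, G x) = -∫ x in Ω, (f1 x + f2 x) := by
      rw [← integral_neg]
      apply integral_congr_ae
      refine Filter.Eventually.of_forall fun x => ?_
      simp only [hG, hf1, hf2]; ring
    rw [hGe, hia]
    have : (0:ℝ) ≤ ∫ x in Ω, f1 x := hfoc
    linarith
  -- Step 4: -∫ f2 = ∫ T1 - ∫ F + ∫ T2a - ∫ f2'  where pointwise -f2 = T1 - F + (T2a - f2)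
  have hiTF : Integrable (fun x => T1 x - F x) ν := hiT1.sub hiF
  have hiT2f2 : Integrable (fun x => T2a x - f2 x) ν := hiT2a.sub hif2
  have step4 : -(∫ x in Ω, f2 x) =
      (∫ x in Ω, T1 x) - (∫ x in Ω, F x) + ((∫ x in Ω, T2a x) - ∫ x in Ω, f2 x) := by
    rw [← integral_neg]
    have he : (∫ x in Ω, (-f2 x)) = ∫ x in Ω, (T1 x - F x + (T2a x - f2 x)) := by
      apply integral_congr_ae
      refine Filter.Eventually.of_forall fun x => ?_
      simp only [hf2, hT1, hF, hT2a]; ring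
    rw [he, integral_add hiTF hiT2f2, integral_sub hiT1 hiF, integral_sub hiT2a hif2]
  -- conclude
  have hT2eq : (∫ x in Ω, deriv α (ρh x) * (‖uh x‖ ^ 2 - ‖u x‖ ^ 2) * (ρ x - ρh x))
      = (∫ x in Ω, T2a x) - ∫ x in Ω, f2 x := by
    rw [← integral_sub hiT2a hif2]
    apply integral_congr_ae
    refine Filter.Eventually.of_forall fun x => ?_
    simp only [hT2a, hf2]; ring
  have hconst : (∫ x in Uθ, m * θ * (ρ x - ρh x)^2) = m * θ * ∫ x in Uθ, (ρ x - ρh x)^2 :=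
    integral_const_mul _ _
  rw [hT2eq]
  have hFnn : (0:ℝ) ≤ ∫ x in Ω, F x := hfoch
  calc m * θ * (∫ x in Uθ, (ρ x - ρh x)^2) = ∫ x in Uθ, m * θ * (ρ x - ρh x)^2 := hconst.symm
    _ ≤ ∫ x in Uθ, G x := step1
    _ ≤ ∫ x in Ω, G x := step2
    _ ≤ -∫ x in Ω, f2 x := step3
    _ = (∫ x in Ω, T1 x) - (∫ x in Ω, F x) + ((∫ x in Ω, T2a x) - ∫ x in Ω, f2 x) := step4
    _ ≤ (∫ x in Ω, T1 x) + ((∫ x in Ω, T2a x) - ∫ x in Ω, f2 x) := by linarith
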